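/- A polymatroid f on M is connected (f(A)+f(B) > f(M) for every partition M = A ⊔ B into nonempty parts) if and only if its dual f⊥ is connected. -/
import Mathlib

/-- A polymatroid is connected if and only if its dual is connected. -/
theorem connected_iff_dual_connected {α : Type*} [DecidableEq α] (M : Finset α)
    (f : Finset α → ℝ)
    (hempty : f ∅ = 0)
    (hnonneg : ∀ A, A ⊆ M → 0 ≤ f A)
    (hmono : ∀ A B : Finset α, A ⊆ B → B ⊆ M → f A ≤ f B)
    (hsub : ∀ A B : Finset α, A ⊆ M → B ⊆ M → f (A ∪ B) + f (A ∩ B) ≤ f A + f B)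
    (fd : Finset α → ℝ)
    (hfd : ∀ A : Finset α, fd A = f (M \ A) + (∑ j ∈ A, f {j}) - f M) :
    (∀ A B : Finset α, A ∪ B = M → Disjoint A B → A.Nonempty → B.Nonempty →
        f A + f B > f M) ↔
    (∀ A B : Finset α, A ∪ B = M → Disjoint A B → A.Nonempty → B.Nonempty →
        fd A + fd B > fd M) := by
  have key : ∀ A B : Finset α, A ∪ B = M → Disjoint A B →
      (fd A + fd B > fd M ↔ f A + f B > f M) := by
    intro A B hU hD
    have hMA : M \ A = B := by rw [← hU]; exact Finset.union_sdiff_cancel_left hD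
    have hMB : M \ B = A := by rw [← hU]; exact Finset.union_sdiff_cancel_right hD
    have hsum : (∑ j ∈ M, f {j}) = (∑ j ∈ A, f {j}) + ∑ j ∈ B, f {j} := by
      rw [← hU, Finset.sum_union hD]
    rw [hfd A, hfd B, hfd M, hMA, hMB, Finset.sdiff_self, hempty, hsum]
    constructor <;> intro h <;> linarith
  constructor <;> intro h A B hU hD hA hB
  · exact (key A B hU hD).mpr (h A B hU hD hA hB)
  · exact (key A B hU hD).mp (h A B hU hD hA hB)
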